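/- Let G¹=(V¹,E¹) and G²=(V²,E²) be finite simple graphs. If RD(G¹,G²) = 0 (computed on the common vertex set V¹ ∪ V², with missing vertices adjoined as isolated vertices), then E¹ = E², and every vertex of V¹ \ V² is isolated in G¹ and every vertex of V² \ V¹ is isolated in G²; in particular the two graphs differ only by a set of isolated vertices. -/

import Mathlib

open scoped Classical BigOperators ENNReal
open Filter MeasureTheory Topology Asymptotics ProbabilityTheory

noncomputable section

namespace RP

variable {V : Type*} [Fintype V]

/-- A unit flow from `u` to `v` on the graph `G`. -/
def IsUnitFlow (G : SimpleGraph V) (u v : V) (f : V → V → ℝ) : Prop :=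
  (∀ a b, f a b = - f b a) ∧
  (∀ a b, ¬ G.Adj a b → f a b = 0) ∧
  (∀ w, ∑ x, f w x = (if w = u then (1:ℝ) else 0) - (if w = v then (1:ℝ) else 0))

/-- Energy of a flow (each undirected edge counted once). -/
def energy (f : V → V → ℝ) : ℝ := (1/2) * ∑ a, ∑ b, (f a b)^2

/-- Effective resistance as infimum of energies of unit flows, `∞` if disconnected. -/
def effRes (G : SimpleGraph V) (u v : V) : ℝ≥0∞ :=
  sInf {x : ℝ≥0∞ | ∃ f, IsUnitFlow G u v f ∧ x = ENNReal.ofReal (energy f)}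

/-- Renormalized effective resistance `R̂/(R̂+1)`, equal to 1 when disconnected. -/
def renRes (G : SimpleGraph V) (u v : V) : ℝ :=
  if effRes G u v = ⊤ then 1
  else (effRes G u v).toReal / ((effRes G u v).toReal + 1)

/-- Renormalized resistance distance, summed over pairs `u < v` in `S`. -/
def RDon [LinearOrder V] (S : Finset V) (G₁ G₂ : SimpleGraph V) : ℝ :=
  ∑ p ∈ (S ×ˢ S).filter (fun p => p.1 < p.2),
    |renRes G₁ p.1 p.2 - renRes G₂ p.1 p.2|

/-- Renormalized resistance distance on a full common vertex set. -/
def RD [LinearOrder V] (G₁ G₂ : SimpleGraph V) : ℝ := RDon Finset.univ G₁ G₂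



open RealInnerProductSpace

section Aux

/-- inner product of two functions. -/
def ip (x y : V → ℝ) : ℝ := ∑ a, x a * y a

/-- graph Laplacian. -/
def lap (G : SimpleGraph V) (φ : V → ℝ) : V → ℝ :=
  fun a => ∑ b, if G.Adj a b then φ a - φ b else 0

/-- difference of indicator vectors. -/
def dvec (u v : V) : V → ℝ :=
  fun a => (if a = u then (1:ℝ) else 0) - (if a = v then (1:ℝ) else 0)

/-- Dirichlet form. -/
def qform (G : SimpleGraph V) (φ ψ : V → ℝ) : ℝ :=
  ∑ a, ∑ b, (if G.Adj a b then (φ a - φ b) * (ψ a - ψ b) else 0)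

lemma sum_mul_dvec (x : V → ℝ) (u v : V) : ip x (dvec u v) = x u - x v := by
  simp [ip, dvec, mul_sub, Finset.sum_sub_distrib, mul_ite, mul_one, mul_zero]

lemma ip_comm (x y : V → ℝ) : ip x y = ip y x := by
  simp [ip, mul_comm]


lemma two_ip_lap (G : SimpleGraph V) (φ ψ : V → ℝ) :
    2 * ip (lap G φ) ψ = qform G φ ψ := by
  have h1 : ip (lap G φ) ψ = ∑ a, ∑ b, (if G.Adj a b then (φ a - φ b) * ψ a else 0) := by
    simp [ip, lap, Finset.sum_mul, ite_mul, zero_mul]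
  have h2 : (∑ a, ∑ b, (if G.Adj a b then (φ a - φ b) * ψ b else 0))
      = - ∑ a, ∑ b, (if G.Adj a b then (φ a - φ b) * ψ a else 0) := by
    rw [Finset.sum_comm]
    rw [← Finset.sum_neg_distrib]
    refine Finset.sum_congr rfl fun b _ => ?_
    rw [← Finset.sum_neg_distrib]
    refine Finset.sum_congr rfl fun a _ => ?_
    by_cases h : G.Adj a b
    · rw [if_pos h, if_pos (G.adj_symm h)]; ring
    · rw [if_neg h, if_neg (fun h' => h (G.adj_symm h'))]; ring
  have h3 : qform G φ ψ
      = (∑ a, ∑ b, (if G.Adj a b then (φ a - φ b) * ψ a else 0))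
        - ∑ a, ∑ b, (if G.Adj a b then (φ a - φ b) * ψ b else 0) := by
    rw [← Finset.sum_sub_distrib]
    refine Finset.sum_congr rfl fun a _ => ?_
    rw [← Finset.sum_sub_distrib]
    refine Finset.sum_congr rfl fun b _ => ?_
    by_cases h : G.Adj a b <;> simp [h] <;> ring
  rw [h1, h3, h2]; ring


lemma flow_pair (f : V → V → ℝ) (hanti : ∀ a b, f a b = - f b a) (ψ : V → ℝ) :
    ∑ a, ∑ b, f a b * (ψ a - ψ b) = 2 * ∑ a, ψ a * ∑ b, f a b := by
  have h2 : (∑ a, ∑ b, f a b * ψ b) = - ∑ a, ∑ b, f a b * ψ a := by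
    rw [Finset.sum_comm, ← Finset.sum_neg_distrib]
    refine Finset.sum_congr rfl fun b _ => ?_
    rw [← Finset.sum_neg_distrib]
    refine Finset.sum_congr rfl fun a _ => ?_
    rw [hanti a b]; ring
  have h3 : (∑ a, ∑ b, f a b * (ψ a - ψ b))
      = (∑ a, ∑ b, f a b * ψ a) - ∑ a, ∑ b, f a b * ψ b := by
    rw [← Finset.sum_sub_distrib]
    refine Finset.sum_congr rfl fun a _ => ?_
    rw [← Finset.sum_sub_distrib]
    refine Finset.sum_congr rfl fun b _ => ?_
    ring
  have h4 : ∀ a, ∑ b, f a b * ψ a = ψ a * ∑ b, f a b := by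
    intro a; rw [Finset.mul_sum]; exact Finset.sum_congr rfl fun b _ => mul_comm _ _
  rw [h3, h2]
  rw [Finset.sum_congr rfl fun a _ => h4 a]
  ring

lemma div_sum (f : V → V → ℝ) (u v : V)
    (hdiv : ∀ w, ∑ x, f w x = (if w = u then (1:ℝ) else 0) - (if w = v then (1:ℝ) else 0))
    (ψ : V → ℝ) : ∑ a, ψ a * ∑ b, f a b = ψ u - ψ v := by
  have : ∀ a, ψ a * ∑ b, f a b = ψ a * ((if a = u then (1:ℝ) else 0) - (if a = v then (1:ℝ) else 0)) :=
    fun a => by rw [hdiv a]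
  rw [Finset.sum_congr rfl fun a _ => this a]
  simp [mul_sub, Finset.sum_sub_distrib, mul_ite, mul_one, mul_zero]


lemma qform_nonneg (G : SimpleGraph V) (φ : V → ℝ) : 0 ≤ qform G φ φ := by
  refine Finset.sum_nonneg fun a _ => Finset.sum_nonneg fun b _ => ?_
  by_cases h : G.Adj a b <;> simp [h, mul_self_nonneg]

lemma energy_ge_of_flow (G : SimpleGraph V) (u v : V) (f : V → V → ℝ) (φ : V → ℝ)
    (hf : IsUnitFlow G u v f) :
    2 * (φ u - φ v) - ip (lap G φ) φ ≤ energy f := by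
  obtain ⟨hanti, hzero, hdiv⟩ := hf
  have hpt : ∀ a b, 2 * (f a b * (φ a - φ b))
      - (if G.Adj a b then (φ a - φ b) * (φ a - φ b) else 0) ≤ (f a b)^2 := by
    intro a b
    by_cases h : G.Adj a b
    · rw [if_pos h]; nlinarith [sq_nonneg (f a b - (φ a - φ b))]
    · rw [if_neg h, hzero a b h]; norm_num
  have hsum : 2 * (∑ a, ∑ b, f a b * (φ a - φ b)) - qform G φ φ ≤ ∑ a, ∑ b, (f a b)^2 := by
    have := Finset.sum_le_sum (fun a (_ : a ∈ Finset.univ) =>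
      Finset.sum_le_sum (fun b (_ : b ∈ Finset.univ) => hpt a b))
    calc 2 * (∑ a, ∑ b, f a b * (φ a - φ b)) - qform G φ φ
        = ∑ a, ∑ b, (2 * (f a b * (φ a - φ b))
            - (if G.Adj a b then (φ a - φ b) * (φ a - φ b) else 0)) := by
          rw [Finset.mul_sum]
          rw [qform, ← Finset.sum_sub_distrib]
          refine Finset.sum_congr rfl fun a _ => ?_
          rw [Finset.mul_sum, ← Finset.sum_sub_distrib]
      _ ≤ ∑ a, ∑ b, (f a b)^2 := this
  have hfp : ∑ a, ∑ b, f a b * (φ a - φ b) = 2 * (φ u - φ v) := by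
    rw [flow_pair f hanti φ, div_sum f u v hdiv φ]
  have hq := two_ip_lap G φ φ
  rw [hfp] at hsum
  rw [energy]; linarith

lemma potential_flow (G : SimpleGraph V) (u v : V) (φ : V → ℝ)
    (hφ : lap G φ = dvec u v) :
    IsUnitFlow G u v (fun a b => if G.Adj a b then φ a - φ b else 0) ∧
    energy (fun a b => if G.Adj a b then φ a - φ b else 0) = φ u - φ v := by
  constructor
  · refine ⟨fun a b => ?_, fun a b h => if_neg h, fun w => ?_⟩
    · dsimp only
      by_cases h : G.Adj a b
      · rw [if_pos h, if_pos (G.adj_symm h)]; ring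
      · rw [if_neg h, if_neg (fun h' => h (G.adj_symm h'))]; ring
    · have : (∑ x, if G.Adj w x then φ w - φ x else 0) = lap G φ w := rfl
      rw [this, hφ]; rfl
  · have h1 : energy (fun a b => if G.Adj a b then φ a - φ b else 0)
        = (1/2) * qform G φ φ := by
      rw [energy, qform]
      congr 1
      refine Finset.sum_congr rfl fun a _ => Finset.sum_congr rfl fun b _ => ?_
      by_cases h : G.Adj a b <;> simp [h] <;> ring
    have h2 := two_ip_lap G φ φ
    have h3 : ip (lap G φ) φ = φ u - φ v := by
      rw [hφ, ip_comm, sum_mul_dvec]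
    rw [h1]; linarith

lemma pot_val_nonneg (G : SimpleGraph V) (u v : V) (φ : V → ℝ)
    (hφ : lap G φ = dvec u v) : 0 ≤ φ u - φ v := by
  have h2 := two_ip_lap G φ φ
  have h3 : ip (lap G φ) φ = φ u - φ v := by rw [hφ, ip_comm, sum_mul_dvec]
  have := qform_nonneg G φ
  linarith

lemma effRes_eq_of_potential (G : SimpleGraph V) (u v : V) (φ : V → ℝ)
    (hφ : lap G φ = dvec u v) :
    effRes G u v = ENNReal.ofReal (φ u - φ v) := by
  obtain ⟨hflow, hen⟩ := potential_flow G u v φ hφ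
  refine le_antisymm ?_ ?_
  · exact sInf_le ⟨_, hflow, by rw [hen]⟩
  · refine le_sInf fun x hx => ?_
    obtain ⟨f, hf, rfl⟩ := hx
    refine ENNReal.ofReal_le_ofReal ?_
    have h1 := energy_ge_of_flow G u v f φ hf
    have h3 : ip (lap G φ) φ = φ u - φ v := by rw [hφ, ip_comm, sum_mul_dvec]
    linarith

lemma effRes_self (G : SimpleGraph V) (u : V) : effRes G u u = 0 := by
  have : (0:ℝ≥0∞) ∈ {x : ℝ≥0∞ | ∃ f, IsUnitFlow G u u f ∧ x = ENNReal.ofReal (energy f)} := by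
    refine ⟨fun _ _ => 0, ⟨fun a b => by ring, fun a b _ => rfl, fun w => by simp⟩, ?_⟩
    simp [energy]
  exact le_antisymm (sInf_le this) zero_le

lemma effRes_symm (G : SimpleGraph V) (u v : V) : effRes G u v = effRes G v u := by
  have key : ∀ (a b : V) (x : ℝ≥0∞), (∃ f, IsUnitFlow G a b f ∧ x = ENNReal.ofReal (energy f)) →
      (∃ f, IsUnitFlow G b a f ∧ x = ENNReal.ofReal (energy f)) := by
    rintro a b x ⟨f, ⟨hanti, hzero, hdiv⟩, rfl⟩
    refine ⟨fun p q => - f p q, ⟨fun p q => by dsimp only; rw [hanti p q], fun p q h => by dsimp only; rw [hzero p q h]; ring,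
      fun w => ?_⟩, ?_⟩
    · rw [Finset.sum_neg_distrib, hdiv w]; ring
    · congr 1
      simp [energy]
  rw [effRes, effRes]
  congr 1
  ext x
  exact ⟨key u v x, key v u x⟩

lemma effRes_eq_top_of_not_reachable (G : SimpleGraph V) (u v : V)
    (h : ¬ G.Reachable u v) : effRes G u v = ⊤ := by
  have hset : {x : ℝ≥0∞ | ∃ f, IsUnitFlow G u v f ∧ x = ENNReal.ofReal (energy f)} = ∅ := by
    rw [Set.eq_empty_iff_forall_notMem]
    rintro x ⟨f, ⟨hanti, hzero, hdiv⟩, rfl⟩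
    set ψ : V → ℝ := fun a => if G.Reachable u a then (1:ℝ) else 0 with hψ
    have h1 : ∑ a, ψ a * ∑ b, f a b = 1 := by
      rw [div_sum f u v hdiv ψ]
      have : ψ u = 1 := if_pos (SimpleGraph.Reachable.refl u)
      have h2 : ψ v = 0 := if_neg h
      rw [this, h2]; ring
    have h0 : ∑ a, ∑ b, f a b * (ψ a - ψ b) = 0 := by
      refine Finset.sum_eq_zero fun a _ => Finset.sum_eq_zero fun b _ => ?_
      by_cases hadj : G.Adj a b
      · have : ψ a = ψ b := by
          by_cases hr : G.Reachable u a
          · show (if G.Reachable u a then (1:ℝ) else 0) = (if G.Reachable u b then (1:ℝ) else 0)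
            rw [if_pos hr, if_pos (hr.trans hadj.reachable)]
          · show (if G.Reachable u a then (1:ℝ) else 0) = (if G.Reachable u b then (1:ℝ) else 0)
            rw [if_neg hr, if_neg (fun hb => hr (hb.trans hadj.symm.reachable))]
        rw [this]; ring
      · rw [hzero a b hadj]; ring
    rw [flow_pair f hanti ψ, h1] at h0
    norm_num at h0
  rw [effRes, hset, sInf_empty]

lemma reachable_of_effRes_ne_top (G : SimpleGraph V) (u v : V)
    (h : effRes G u v ≠ ⊤) : G.Reachable u v := by
  by_contra hr
  exact h (effRes_eq_top_of_not_reachable G u v hr)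


lemma qform_comm (G : SimpleGraph V) (φ ψ : V → ℝ) : qform G φ ψ = qform G ψ φ := by
  refine Finset.sum_congr rfl fun a _ => Finset.sum_congr rfl fun b _ => ?_
  by_cases h : G.Adj a b <;> simp [h] ; ring

/-- view a function as an element of Euclidean space -/
def toE (x : V → ℝ) : EuclideanSpace ℝ V := WithLp.toLp 2 x
/-- view an element of Euclidean space as a function -/
def toF (x : EuclideanSpace ℝ V) : V → ℝ := x.ofLp

@[simp] lemma toF_toE (x : V → ℝ) : toF (toE x) = x := rfl

/-- The Laplacian as a linear endomorphism of Euclidean space. -/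
def lapL (G : SimpleGraph V) : EuclideanSpace ℝ V →ₗ[ℝ] EuclideanSpace ℝ V where
  toFun := fun φ => toE (lap G (toF φ))
  map_add' := fun φ ψ => by
    refine PiLp.ext fun a => ?_
    show (∑ b, if G.Adj a b then (φ + ψ) a - (φ + ψ) b else 0)
      = (∑ b, if G.Adj a b then φ a - φ b else 0) + (∑ b, if G.Adj a b then ψ a - ψ b else 0)
    rw [← Finset.sum_add_distrib]
    refine Finset.sum_congr rfl fun b _ => ?_
    have h1 : (φ + ψ) a = φ a + ψ a := rfl
    have h2 : (φ + ψ) b = φ b + ψ b := rfl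
    by_cases h : G.Adj a b <;> simp [h, h1, h2] ; ring
  map_smul' := fun c φ => by
    refine PiLp.ext fun a => ?_
    show (∑ b, if G.Adj a b then (c • φ) a - (c • φ) b else 0)
      = c * (∑ b, if G.Adj a b then φ a - φ b else 0)
    rw [Finset.mul_sum]
    refine Finset.sum_congr rfl fun b _ => ?_
    have h1 : (c • φ) a = c * φ a := rfl
    have h2 : (c • φ) b = c * φ b := rfl
    by_cases h : G.Adj a b <;> simp [h, h1, h2] ; ring

lemma inner_eq_ip (x y : EuclideanSpace ℝ V) : ⟪x, y⟫ = ip (toF x) (toF y) := by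
  rw [PiLp.inner_apply]
  exact Finset.sum_congr rfl fun i _ => by simp [toF, mul_comm]

lemma lapL_apply (G : SimpleGraph V) (x : EuclideanSpace ℝ V) :
    toF (lapL G x) = lap G (toF x) := rfl

lemma lapL_symm (G : SimpleGraph V) (x y : EuclideanSpace ℝ V) :
    ⟪lapL G x, y⟫ = ⟪x, lapL G y⟫ := by
  rw [inner_eq_ip, inner_eq_ip, lapL_apply]
  have h1 := two_ip_lap G (toF x) (toF y)
  have h2 := two_ip_lap G (toF y) (toF x)
  have h3 := qform_comm G (toF x) (toF y)
  have h4 := ip_comm (lap G (toF y)) (toF x)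
  have h5 : ip (toF x) (toF (lapL G y)) = ip (toF x) (lap G (toF y)) := by rw [lapL_apply]
  linarith

lemma mem_ker_lapL_iff (G : SimpleGraph V) (x : EuclideanSpace ℝ V) :
    x ∈ LinearMap.ker (lapL G) ↔ ∀ u v, G.Reachable u v → toF x u = toF x v := by
  constructor
  · intro hx u v huv
    have h0 : lapL G x = 0 := hx
    have hq : qform G (toF x) (toF x) = 0 := by
      have h1 := two_ip_lap G (toF x) (toF x)
      have h2 : ip (lap G (toF x)) (toF x) = 0 := by
        have h9 : lap G (toF x) = fun _ => 0 := by
          have := congrArg toF h0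
          rw [lapL_apply] at this
          exact this
        rw [h9]; simp [ip]
      linarith
    have hadj : ∀ a b, G.Adj a b → toF x a = toF x b := by
      intro a b hab
      have hterm : ∀ a b, (0:ℝ) ≤ (if G.Adj a b then (toF x a - toF x b) * (toF x a - toF x b) else 0) := by
        intro a b; by_cases h : G.Adj a b <;> simp [h, mul_self_nonneg]
      have h5 : ∀ a ∈ Finset.univ, (0:ℝ) ≤ ∑ b, (if G.Adj a b then (toF x a - toF x b) * (toF x a - toF x b) else 0) :=
        fun a _ => Finset.sum_nonneg fun b _ => hterm a b
      have h6 := (Finset.sum_eq_zero_iff_of_nonneg h5).mp hq a (Finset.mem_univ a)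
      have h7 := (Finset.sum_eq_zero_iff_of_nonneg (fun b _ => hterm a b)).mp h6 b (Finset.mem_univ b)
      rw [if_pos hab] at h7
      have := mul_self_eq_zero.mp h7
      linarith
    obtain ⟨w⟩ := huv
    induction w with
    | nil => rfl
    | cons h p ih => exact (hadj _ _ h).trans ih
  · intro hx
    have : lapL G x = 0 := by
      refine PiLp.ext fun a => ?_
      show (∑ b, if G.Adj a b then toF x a - toF x b else 0) = 0
      refine Finset.sum_eq_zero fun b _ => ?_
      by_cases h : G.Adj a b
      · rw [if_pos h, hx a b h.reachable]; ring
      · rw [if_neg h]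
    exact this

lemma range_lapL (G : SimpleGraph V) :
    LinearMap.range (lapL G) = (LinearMap.ker (lapL G))ᗮ := by
  have horth : (LinearMap.range (lapL G))ᗮ = LinearMap.ker (lapL G) := by
    ext y
    rw [Submodule.mem_orthogonal]
    constructor
    · intro hy
      have h1 : ⟪lapL G y, lapL G y⟫ = 0 := by
        rw [lapL_symm, real_inner_comm]
        exact hy (lapL G (lapL G y)) ⟨lapL G y, rfl⟩
      exact LinearMap.mem_ker.mpr (inner_self_eq_zero.mp h1)
    · intro hy z hz
      obtain ⟨w, rfl⟩ := hz
      rw [lapL_symm, LinearMap.mem_ker.mp hy, inner_zero_right]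
  rw [← horth, Submodule.orthogonal_orthogonal]

lemma dvec_mem_orth (G : SimpleGraph V) (u v : V) (h : G.Reachable u v) :
    toE (dvec u v) ∈ (LinearMap.ker (lapL G))ᗮ := by
  rw [Submodule.mem_orthogonal]
  intro k hk
  rw [inner_eq_ip, toF_toE, sum_mul_dvec]
  rw [(mem_ker_lapL_iff G k).mp hk u v h]
  ring

lemma exists_potential (G : SimpleGraph V) (u v : V) (h : G.Reachable u v) :
    ∃ φ : V → ℝ, lap G φ = dvec u v := by
  have hd := dvec_mem_orth G u v h
  rw [← range_lapL] at hd
  obtain ⟨φ, hφ⟩ := hd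
  refine ⟨toF φ, ?_⟩
  rw [← lapL_apply, hφ]
  rfl


-- value of inner products against generators
lemma inner_dvec_right (ψ : EuclideanSpace ℝ V) (c d : V) :
    ⟪ψ, toE (dvec c d)⟫ = toF ψ c - toF ψ d := by
  rw [inner_eq_ip, toF_toE, sum_mul_dvec]

lemma inner_dvec_left (ψ : EuclideanSpace ℝ V) (c d : V) :
    ⟪toE (dvec c d), ψ⟫ = toF ψ c - toF ψ d := by
  rw [real_inner_comm, inner_dvec_right]

lemma dvec_cocycle (a b c : V) : toE (dvec (V := V) a c) = toE (dvec a b) + toE (dvec b c) := by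
  refine PiLp.ext fun x => ?_
  show dvec a c x = dvec a b x + dvec b c x
  simp only [dvec]; ring

lemma dvec_rev (a b : V) : toE (dvec (V := V) b a) = - toE (dvec a b) := by
  refine PiLp.ext fun x => ?_
  show dvec b a x = - dvec a b x
  simp only [dvec]; ring

lemma exists_potentialE (G : SimpleGraph V) (u v : V) (h : G.Reachable u v) :
    ∃ ψ : EuclideanSpace ℝ V, lapL G ψ = toE (dvec u v) := by
  obtain ⟨φ, hφ⟩ := exists_potential G u v h
  refine ⟨toE φ, ?_⟩
  have : toF (lapL G (toE φ)) = toF (toE (dvec u v)) := by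
    rw [lapL_apply, toF_toE, toF_toE, hφ]
  refine PiLp.ext fun x => ?_
  exact congrFun this x

/-- a chosen potential for the pair `(a,b)`. -/
def sol (G : SimpleGraph V) (a b : V) : EuclideanSpace ℝ V :=
  if h : G.Reachable a b then Classical.choose (exists_potentialE G a b h) else 0

lemma sol_spec (G : SimpleGraph V) {a b : V} (h : G.Reachable a b) :
    lapL G (sol G a b) = toE (dvec a b) := by
  rw [sol, dif_pos h]
  exact Classical.choose_spec (exists_potentialE G a b h)

/-- the value `φ c - φ d` for the chosen potential of `(a,b)`. -/
def Fv (G : SimpleGraph V) (a b c d : V) : ℝ := toF (sol G a b) c - toF (sol G a b) d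

lemma Fv_def (G : SimpleGraph V) (a b c d : V) :
    Fv G a b c d = toF (sol G a b) c - toF (sol G a b) d := rfl

lemma Fv_wd (G : SimpleGraph V) {a b c d : V} (hab : G.Reachable a b) (hcd : G.Reachable c d)
    (φ : EuclideanSpace ℝ V) (hφ : lapL G φ = toE (dvec a b)) :
    toF φ c - toF φ d = Fv G a b c d := by
  have hker : φ - sol G a b ∈ LinearMap.ker (lapL G) := by
    rw [LinearMap.mem_ker, map_sub, hφ, sol_spec G hab, sub_self]
  have horth := dvec_mem_orth G c d hcd
  have h0 : ⟪φ - sol G a b, toE (dvec c d)⟫ = 0 :=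
    (Submodule.mem_orthogonal _ _).mp horth _ hker
  rw [inner_sub_left, inner_dvec_right, inner_dvec_right] at h0
  unfold Fv
  linarith

lemma Fv_symm (G : SimpleGraph V) {a b c d : V} (hab : G.Reachable a b) (hcd : G.Reachable c d) :
    Fv G a b c d = Fv G c d a b := by
  have h1 : Fv G a b c d = ⟪sol G a b, toE (dvec c d)⟫ := (inner_dvec_right _ _ _).symm
  rw [h1, ← sol_spec G hcd, ← lapL_symm, sol_spec G hab, inner_dvec_left]
  rfl

lemma Fv_split_right (G : SimpleGraph V) (a b c d e : V) :
    Fv G a b c d = Fv G a b c e + Fv G a b e d := by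
  unfold Fv; ring

lemma Fv_split_left (G : SimpleGraph V) {a b c x y : V}
    (hab : G.Reachable a b) (hbc : G.Reachable b c) (hxy : G.Reachable x y) :
    Fv G a c x y = Fv G a b x y + Fv G b c x y := by
  have hac : G.Reachable a c := hab.trans hbc
  have hsol : lapL G (sol G a b + sol G b c) = toE (dvec a c) := by
    rw [map_add, sol_spec G hab, sol_spec G hbc, ← dvec_cocycle]
  have hthis := Fv_wd G hac hxy (sol G a b + sol G b c) hsol
  have hx : toF (sol G a b + sol G b c) x = toF (sol G a b) x + toF (sol G b c) x := rfl
  have hy : toF (sol G a b + sol G b c) y = toF (sol G a b) y + toF (sol G b c) y := rfl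
  rw [hx, hy] at hthis
  unfold Fv at *
  linarith

lemma Fv_rev_left (G : SimpleGraph V) {a b x y : V}
    (hab : G.Reachable a b) (hxy : G.Reachable x y) :
    Fv G b a x y = - Fv G a b x y := by
  have hsol : lapL G (- sol G a b) = toE (dvec b a) := by
    rw [map_neg, sol_spec G hab, ← dvec_rev]
  have hthis := Fv_wd G hab.symm hxy (- sol G a b) hsol
  have hx : toF (- sol G a b) x = - toF (sol G a b) x := rfl
  have hy : toF (- sol G a b) y = - toF (sol G a b) y := rfl
  rw [hx, hy] at hthis
  unfold Fv at *
  linarith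

lemma restrict_potential (G : SimpleGraph V) (u v : V) (φ : EuclideanSpace ℝ V)
    (hφ : lapL G φ = toE (dvec u v)) (huv : G.Reachable u v) :
    lapL G (toE (fun a => if G.Reachable u a then toF φ a else 0)) = toE (dvec u v) := by
  set ψ : V → ℝ := fun a => if G.Reachable u a then toF φ a else 0 with hψ
  have hmain : lap G ψ = dvec u v := by
    funext a
    by_cases hr : G.Reachable u a
    · have h3 : lap G ψ a = lap G (toF φ) a := by
        refine Finset.sum_congr rfl fun b _ => ?_
        by_cases h : G.Adj a b
        · rw [if_pos h, if_pos h]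
          have hrb : G.Reachable u b := hr.trans h.reachable
          rw [hψ]
          simp only [if_pos hr, if_pos hrb]
        · rw [if_neg h, if_neg h]
      have h4 : lap G (toF φ) a = dvec u v a := by
        rw [← lapL_apply, hφ, toF_toE]
      rw [h3, h4]
    · have h1 : lap G ψ a = 0 := by
        refine Finset.sum_eq_zero fun b _ => ?_
        by_cases h : G.Adj a b
        · have hrb : ¬ G.Reachable u b := fun hb => hr (hb.trans h.symm.reachable)
          rw [if_pos h, hψ]
          simp only [if_neg hr, if_neg hrb]
          ring
        · rw [if_neg h]
      rw [h1]
      have hau : a ≠ u := fun h => hr (by rw [h])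
      have hav : a ≠ v := fun h => hr (by rw [h]; exact huv)
      simp [dvec, hau, hav]
  have h2 : toF (lapL G (toE ψ)) = toF (toE (dvec u v)) := by
    rw [lapL_apply, toF_toE, hmain, toF_toE]
  exact PiLp.ext fun a => congrFun h2 a

lemma Fv_cross_zero (G : SimpleGraph V) {u v w z : V}
    (huv : G.Reachable u v) (hwz : G.Reachable w z) (hno : ¬ G.Reachable u w) :
    Fv G u v w z = 0 := by
  have hψ := restrict_potential G u v (sol G u v) (sol_spec G huv) huv
  have hkey := Fv_wd G huv hwz _ hψ
  rw [← hkey, toF_toE]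
  have hz : ¬ G.Reachable u z := fun h => hno (h.trans hwz.symm)
  rw [if_neg hno, if_neg hz]
  ring

lemma Fv_rev_right (G : SimpleGraph V) (a b c d : V) : Fv G a b d c = - Fv G a b c d := by
  rw [Fv_def, Fv_def]; ring

lemma sol_spec' (G : SimpleGraph V) {a b : V} (h : G.Reachable a b) :
    lap G (toF (sol G a b)) = dvec a b := by
  have := congrArg toF (sol_spec G h)
  rw [lapL_apply, toF_toE] at this
  exact this

section TwoGraphs
variable (G₁ G₂ : SimpleGraph V)

/-- base-base case: the off-diagonal resistance-form values agree. -/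
lemma Fv_eq_of (Hreach : ∀ u v, G₁.Reachable u v ↔ G₂.Reachable u v)
    (Hdiag : ∀ a b, G₁.Reachable a b → Fv G₁ a b a b = Fv G₂ a b a b)
    {u v w z : V} (huv : G₁.Reachable u v) (hwz : G₁.Reachable w z) :
    Fv G₁ u v w z = Fv G₂ u v w z := by
  have huv' : G₂.Reachable u v := (Hreach u v).mp huv
  have hwz' : G₂.Reachable w z := (Hreach w z).mp hwz
  by_cases hcomp : G₁.Reachable u w
  · -- same component
    have hcomp' : G₂.Reachable u w := (Hreach u w).mp hcomp
    -- key : Δ(a-u, u-b) = 0 for a b in the component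
    have key : ∀ a b : V, G₁.Reachable a u → G₁.Reachable u b →
        Fv G₁ a u u b = Fv G₂ a u u b := by
      intro a b hau hub
      have hau' := (Hreach a u).mp hau
      have hub' := (Hreach u b).mp hub
      have hab : G₁.Reachable a b := hau.trans hub
      have hab' := (Hreach a b).mp hab
      have e1 := Fv_split_left G₁ hau hub hab
      have e2 := Fv_split_right G₁ a u a b u
      have e3 := Fv_split_right G₁ u b a b u
      have e4 := Fv_symm G₁ hub hau
      have f1 := Fv_split_left G₂ hau' hub' hab'
      have f2 := Fv_split_right G₂ a u a b u
      have f3 := Fv_split_right G₂ u b a b u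
      have f4 := Fv_symm G₂ hub' hau'
      have d1 := Hdiag a b hab
      have d2 := Hdiag a u hau
      have d3 := Hdiag u b hub
      linarith
    have huw := hcomp
    have huz : G₁.Reachable u z := hcomp.trans hwz
    have e1 := Fv_split_right G₁ u v w z u
    have e2 := Fv_rev_right G₁ u v u w
    have f1 := Fv_split_right G₂ u v w z u
    have f2 := Fv_rev_right G₂ u v u w
    have g1 := Fv_rev_left G₁ huv huw
    have g2 := Fv_rev_left G₂ huv' hcomp'
    have g3 := Fv_rev_left G₁ huv huz
    have g4 := Fv_rev_left G₂ huv' ((Hreach u z).mp huz)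
    have k1 := key v w huv.symm huw
    have k2 := key v z huv.symm huz
    -- Fv G u v w u = - Fv G u v u w ; Fv G u v u w = -Fv G v u u w = -(key)
    linarith
  · have hcomp' : ¬ G₂.Reachable u w := fun h => hcomp ((Hreach u w).mpr h)
    rw [Fv_cross_zero G₁ huv hwz hcomp, Fv_cross_zero G₂ huv' hwz' hcomp']

theorem graphs_eq_of_effRes_eq (Heff : ∀ u v, effRes G₁ u v = effRes G₂ u v) :
    G₁ = G₂ := by
  -- reachability transfer
  have Hhalf : ∀ (H₁ H₂ : SimpleGraph V), (∀ u v, effRes H₁ u v = effRes H₂ u v) →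
      ∀ u v, H₁.Reachable u v → H₂.Reachable u v := by
    intro H₁ H₂ he u v h
    by_contra h2
    obtain ⟨φ, hφ⟩ := exists_potential H₁ u v h
    have e1 := effRes_eq_of_potential H₁ u v φ hφ
    have e2 := effRes_eq_top_of_not_reachable H₂ u v h2
    rw [he, e2] at e1
    exact ENNReal.ofReal_ne_top e1.symm
  have Hreach : ∀ u v, G₁.Reachable u v ↔ G₂.Reachable u v := fun u v =>
    ⟨Hhalf G₁ G₂ Heff u v, Hhalf G₂ G₁ (fun a b => (Heff a b).symm) u v⟩
  -- diagonal values agree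
  have Hdiag : ∀ a b, G₁.Reachable a b → Fv G₁ a b a b = Fv G₂ a b a b := by
    intro a b hab
    have hab' := (Hreach a b).mp hab
    have e1 := effRes_eq_of_potential G₁ a b (toF (sol G₁ a b)) (sol_spec' G₁ hab)
    have e2 := effRes_eq_of_potential G₂ a b (toF (sol G₂ a b)) (sol_spec' G₂ hab')
    rw [Heff a b, e2] at e1
    have n1 := pot_val_nonneg G₂ a b (toF (sol G₂ a b)) (sol_spec' G₂ hab')
    have n2 := pot_val_nonneg G₁ a b (toF (sol G₁ a b)) (sol_spec' G₁ hab)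
    rw [Fv_def, Fv_def]
    exact ((ENNReal.ofReal_eq_ofReal_iff n1 n2).mp e1).symm
  have HFv : ∀ {u v w z : V}, G₁.Reachable u v → G₁.Reachable w z →
      Fv G₁ u v w z = Fv G₂ u v w z := fun h1 h2 => Fv_eq_of G₁ G₂ Hreach Hdiag h1 h2
  -- kernels agree
  set K := LinearMap.ker (lapL G₁) with hKdef
  have hK₂ : LinearMap.ker (lapL G₂) = K := by
    ext x
    rw [hKdef, mem_ker_lapL_iff, mem_ker_lapL_iff]
    constructor
    · intro h a b hr; exact h a b ((Hreach a b).mp hr)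
    · intro h a b hr; exact h a b ((Hreach a b).mpr hr)
  -- the span of generators
  set S : Set (EuclideanSpace ℝ V) := {g | ∃ a b, G₁.Reachable a b ∧ g = toE (dvec a b)} with hSdef
  have hSle : Submodule.span ℝ S ≤ Kᗮ := by
    rw [Submodule.span_le]
    rintro g ⟨a, b, hab, rfl⟩
    exact dvec_mem_orth G₁ a b hab
  have hle2 : Kᗮ ≤ Submodule.span ℝ S := by
    have horth : (Submodule.span ℝ S)ᗮ ≤ K := by
      intro x hx
      rw [hKdef, mem_ker_lapL_iff]
      intro a b hab
      have hmem : toE (dvec a b) ∈ Submodule.span ℝ S :=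
        Submodule.subset_span ⟨a, b, hab, rfl⟩
      have h0 := (Submodule.mem_orthogonal _ x).mp hx _ hmem
      rw [inner_dvec_left] at h0
      linarith
    calc Kᗮ ≤ ((Submodule.span ℝ S)ᗮ)ᗮ := Submodule.orthogonal_le horth
      _ = Submodule.span ℝ S := Submodule.orthogonal_orthogonal _
  -- well-definedness
  have hwd : ∀ (G : SimpleGraph V), LinearMap.ker (lapL G) = K →
      ∀ (φ φ' x : EuclideanSpace ℝ V), lapL G φ = x → lapL G φ' = x →
      ∀ y ∈ Kᗮ, ⟪φ, y⟫ = ⟪φ', y⟫ := by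
    intro G hKG φ φ' x h1 h2 y hy
    have hker : φ - φ' ∈ K := by
      rw [← hKG, LinearMap.mem_ker, map_sub, h1, h2, sub_self]
    have h0 := (Submodule.mem_orthogonal K y).mp hy _ hker
    rw [inner_sub_left] at h0
    linarith
  -- main claim
  have hspan : Kᗮ = Submodule.span ℝ S := le_antisymm hle2 hSle
  have claimA : ∀ x ∈ Submodule.span ℝ S, ∀ (φ₁ φ₂ : EuclideanSpace ℝ V),
      lapL G₁ φ₁ = x → lapL G₂ φ₂ = x →
      ∀ y ∈ Submodule.span ℝ S, ⟪φ₁, y⟫ = ⟪φ₂, y⟫ := by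
    intro x hx
    induction hx using Submodule.span_induction with
    | mem g hg =>
      obtain ⟨a, b, hab, rfl⟩ := hg
      intro φ₁ φ₂ h1 h2 y hy
      induction hy using Submodule.span_induction with
      | mem g' hg' =>
        obtain ⟨c, d, hcd, rfl⟩ := hg'
        rw [inner_dvec_right, inner_dvec_right]
        rw [Fv_wd G₁ hab hcd φ₁ h1,
          Fv_wd G₂ ((Hreach a b).mp hab) ((Hreach c d).mp hcd) φ₂ h2]
        exact HFv hab hcd
      | zero => rw [inner_zero_right, inner_zero_right]
      | add y₁ y₂ hy₁ hy₂ ih₁ ih₂ => rw [inner_add_right, inner_add_right, ih₁, ih₂]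
      | smul c y' hy' ih => rw [real_inner_smul_right, real_inner_smul_right, ih]
    | zero =>
      intro φ₁ φ₂ h1 h2 y hy
      have hyK : y ∈ Kᗮ := by rw [hspan]; exact hy
      have k1 : φ₁ ∈ K := by rw [hKdef]; exact LinearMap.mem_ker.mpr h1
      have k2 : φ₂ ∈ K := by rw [← hK₂]; exact LinearMap.mem_ker.mpr h2
      rw [(Submodule.mem_orthogonal K y).mp hyK _ k1,
        (Submodule.mem_orthogonal K y).mp hyK _ k2]
    | add x₁ x₂ hx₁ hx₂ ih₁ ih₂ =>
      intro φ₁ φ₂ h1 h2 y hy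
      have hr₁ : x₁ ∈ LinearMap.range (lapL G₁) := by
        rw [range_lapL, ← hKdef, hspan]; exact hx₁
      have hr₂ : x₁ ∈ LinearMap.range (lapL G₂) := by
        rw [range_lapL, hK₂, hspan]; exact hx₁
      obtain ⟨ψ₁, hψ₁⟩ := hr₁
      obtain ⟨χ₁, hχ₁⟩ := hr₂
      have hψ₂ : lapL G₁ (φ₁ - ψ₁) = x₂ := by rw [map_sub, h1, hψ₁]; abel
      have hχ₂ : lapL G₂ (φ₂ - χ₁) = x₂ := by rw [map_sub, h2, hχ₁]; abel
      have i1 := ih₁ ψ₁ χ₁ hψ₁ hχ₁ y hy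
      have i2 := ih₂ (φ₁ - ψ₁) (φ₂ - χ₁) hψ₂ hχ₂ y hy
      have e1 : ψ₁ + (φ₁ - ψ₁) = φ₁ := by abel
      have e2 : χ₁ + (φ₂ - χ₁) = φ₂ := by abel
      have e3 : ⟪φ₁, y⟫ = ⟪ψ₁, y⟫ + ⟪φ₁ - ψ₁, y⟫ := by rw [← inner_add_left, e1]
      have e4 : ⟪φ₂, y⟫ = ⟪χ₁, y⟫ + ⟪φ₂ - χ₁, y⟫ := by rw [← inner_add_left, e2]
      rw [e3, e4, i1, i2]
    | smul c x' hx' ih =>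
      intro φ₁ φ₂ h1 h2 y hy
      have hyK : y ∈ Kᗮ := by rw [hspan]; exact hy
      have hr₁ : x' ∈ LinearMap.range (lapL G₁) := by
        rw [range_lapL, ← hKdef, hspan]; exact hx'
      have hr₂ : x' ∈ LinearMap.range (lapL G₂) := by
        rw [range_lapL, hK₂, hspan]; exact hx'
      obtain ⟨ψ, hψ⟩ := hr₁
      obtain ⟨χ, hχ⟩ := hr₂
      have i := ih ψ χ hψ hχ y hy
      have w1 := hwd G₁ hKdef.symm φ₁ (c • ψ) (c • x') h1 (by rw [_root_.map_smul, hψ]) y hyK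
      have w2 := hwd G₂ hK₂ φ₂ (c • χ) (c • x') h2 (by rw [_root_.map_smul, hχ]) y hyK
      rw [w1, w2, real_inner_smul_left, real_inner_smul_left, i]
  -- conclude equality of the Laplacians
  have hTeq : ∀ w : EuclideanSpace ℝ V, lapL G₁ w = lapL G₂ w := by
    intro w
    have hx : lapL G₁ w ∈ Kᗮ := by
      rw [hKdef, ← range_lapL G₁]; exact ⟨w, rfl⟩
    have hxS : lapL G₁ w ∈ Submodule.span ℝ S := by rw [← hspan]; exact hx
    have hx₂ : lapL G₁ w ∈ LinearMap.range (lapL G₂) := by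
      rw [range_lapL G₂, hK₂]; exact hx
    obtain ⟨φ₂, hφ₂⟩ := hx₂
    have hA := claimA _ hxS w φ₂ rfl hφ₂
    have hmem : w - φ₂ ∈ Kᗮᗮ := by
      rw [Submodule.mem_orthogonal]
      intro y hy
      have hyS : y ∈ Submodule.span ℝ S := by rw [← hspan]; exact hy
      have := hA y hyS
      rw [real_inner_comm, inner_sub_left, this]
      ring
    rw [Submodule.orthogonal_orthogonal] at hmem
    have hker : lapL G₂ (w - φ₂) = 0 := by
      have : w - φ₂ ∈ LinearMap.ker (lapL G₂) := by rw [hK₂]; exact hmem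
      exact this
    rw [map_sub, hφ₂, sub_eq_zero] at hker
    exact hker.symm
  -- equality of lap as plain functions
  have hlap : ∀ φ : V → ℝ, lap G₁ φ = lap G₂ φ := by
    intro φ
    have := congrArg toF (hTeq (toE φ))
    rw [lapL_apply, lapL_apply, toF_toE] at this
    exact this
  -- extract adjacency
  have hadj : ∀ a b, a ≠ b → (G₁.Adj a b ↔ G₂.Adj a b) := by
    intro a b hab
    have hval : ∀ G : SimpleGraph V,
        lap G (fun c => if c = b then (1:ℝ) else 0) a = -(if G.Adj a b then (1:ℝ) else 0) := by
      intro G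
      have hterm : ∀ c, (if G.Adj a c then (if a = b then (1:ℝ) else 0) - (if c = b then (1:ℝ) else 0) else 0)
          = -(if c = b then (if G.Adj a c then (1:ℝ) else 0) else 0) := by
        intro c
        by_cases h2 : c = b
        · subst h2
          by_cases h1 : G.Adj a c <;> simp [h1, hab]
        · by_cases h1 : G.Adj a c <;> simp [h1, h2, hab]
      show (∑ c, if G.Adj a c then (if a = b then (1:ℝ) else 0) - (if c = b then (1:ℝ) else 0) else 0)
          = -(if G.Adj a b then (1:ℝ) else 0)
      rw [Finset.sum_congr rfl fun c _ => hterm c, Finset.sum_neg_distrib]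
      congr 1
      exact Finset.sum_ite_eq' Finset.univ b (fun c => if G.Adj a c then (1:ℝ) else 0) |>.trans
        (by simp)
    have h1 := hval G₁
    have h2 := hval G₂
    rw [hlap] at h1
    rw [h2] at h1
    by_cases hA : G₁.Adj a b <;> by_cases hB : G₂.Adj a b
    · exact iff_of_true hA hB
    · rw [if_pos hA, if_neg hB] at h1; norm_num at h1
    · rw [if_neg hA, if_pos hB] at h1; norm_num at h1
    · exact iff_of_false hA hB
  ext a b
  by_cases hab : a = b
  · subst hab; simp [SimpleGraph.irrefl]
  · exact hadj a b hab

end TwoGraphs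

lemma effRes_eq_of_renRes_eq (G₁ G₂ : SimpleGraph V) (u v : V)
    (h : renRes G₁ u v = renRes G₂ u v) : effRes G₁ u v = effRes G₂ u v := by
  unfold renRes at h
  by_cases h1 : effRes G₁ u v = ⊤ <;> by_cases h2 : effRes G₂ u v = ⊤
  · rw [h1, h2]
  · exfalso
    rw [if_pos h1, if_neg h2] at h
    have ht : (0:ℝ) ≤ (effRes G₂ u v).toReal := ENNReal.toReal_nonneg
    have : (effRes G₂ u v).toReal / ((effRes G₂ u v).toReal + 1) < 1 := by
      rw [div_lt_one (by linarith)]; linarith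
    linarith [h ▸ this]
  · exfalso
    rw [if_neg h1, if_pos h2] at h
    have ht : (0:ℝ) ≤ (effRes G₁ u v).toReal := ENNReal.toReal_nonneg
    have : (effRes G₁ u v).toReal / ((effRes G₁ u v).toReal + 1) < 1 := by
      rw [div_lt_one (by linarith)]; linarith
    linarith [h ▸ this]
  · rw [if_neg h1, if_neg h2] at h
    set s := (effRes G₁ u v).toReal with hs
    set t := (effRes G₂ u v).toReal with hts
    have hs0 : (0:ℝ) ≤ s := ENNReal.toReal_nonneg
    have ht0 : (0:ℝ) ≤ t := ENNReal.toReal_nonneg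
    have hst : s = t := by
      field_simp at h
      nlinarith [h]
    exact (ENNReal.toReal_eq_toReal_iff' h1 h2).mp hst

lemma exists_adj_of_reachable (G : SimpleGraph V) (u v : V) (h : G.Reachable u v)
    (hne : u ≠ v) : ∃ w, G.Adj u w := by
  obtain ⟨p⟩ := h
  cases p with
  | nil => exact absurd rfl hne
  | cons hadj _ => exact ⟨_, hadj⟩


end Aux

/-- if two graphs, with respective vertex sets `V₁` and `V₂`, are at renormalized
resistance distance `0` when compared on the common vertex set `V₁ ∪ V₂`, then they have the
same edges, and they differ only by sets of isolated vertices. -/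
theorem RD_eq_zero_implies_same_edges {W : Type*} [Fintype W] [LinearOrder W]
    (V₁ V₂ : Finset W) (G₁ G₂ : SimpleGraph W)
    (h₁ : ∀ u v, G₁.Adj u v → u ∈ V₁ ∧ v ∈ V₁)
    (h₂ : ∀ u v, G₂.Adj u v → u ∈ V₂ ∧ v ∈ V₂)
    (h0 : RDon (V₁ ∪ V₂) G₁ G₂ = 0) :
    G₁ = G₂ ∧
    (∀ v ∈ V₁ \ V₂, ∀ u, ¬ G₁.Adj v u) ∧
    (∀ v ∈ V₂ \ V₁, ∀ u, ¬ G₂.Adj v u) := by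

  have hren : ∀ u v, u ∈ V₁ ∪ V₂ → v ∈ V₁ ∪ V₂ → u < v →
      renRes G₁ u v = renRes G₂ u v := by
    intro u v hu hv huv
    have hmem : (u, v) ∈ ((V₁ ∪ V₂) ×ˢ (V₁ ∪ V₂)).filter (fun p => p.1 < p.2) := by
      rw [Finset.mem_filter, Finset.mem_product]
      exact ⟨⟨hu, hv⟩, huv⟩
    have hnn : ∀ p ∈ ((V₁ ∪ V₂) ×ˢ (V₁ ∪ V₂)).filter (fun p : W × W => p.1 < p.2),
        (0:ℝ) ≤ |renRes G₁ p.1 p.2 - renRes G₂ p.1 p.2| := fun p _ => abs_nonneg _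
    have := (Finset.sum_eq_zero_iff_of_nonneg hnn).mp h0 (u, v) hmem
    have h5 := abs_eq_zero.mp this
    linarith
  have Heff : ∀ u v, effRes G₁ u v = effRes G₂ u v := by
    intro u v
    rcases eq_or_ne u v with rfl | hne
    · rw [effRes_self, effRes_self]
    by_cases hu : u ∈ V₁ ∪ V₂
    · by_cases hv : v ∈ V₁ ∪ V₂
      · rcases lt_trichotomy u v with hlt | heq | hgt
        · exact effRes_eq_of_renRes_eq G₁ G₂ u v (hren u v hu hv hlt)
        · exact absurd heq hne
        · rw [effRes_symm G₁, effRes_symm G₂]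
          exact effRes_eq_of_renRes_eq G₁ G₂ v u (hren v u hv hu hgt)
      · -- v outside: both disconnected
        have hr1 : ¬ G₁.Reachable u v := by
          intro hr
          obtain ⟨w, hw⟩ := exists_adj_of_reachable G₁ v u hr.symm (Ne.symm hne)
          exact hv (Finset.mem_union_left _ (h₁ v w hw).1)
        have hr2 : ¬ G₂.Reachable u v := by
          intro hr
          obtain ⟨w, hw⟩ := exists_adj_of_reachable G₂ v u hr.symm (Ne.symm hne)
          exact hv (Finset.mem_union_right _ (h₂ v w hw).1)
        rw [effRes_eq_top_of_not_reachable G₁ u v hr1,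
          effRes_eq_top_of_not_reachable G₂ u v hr2]
    · have hr1 : ¬ G₁.Reachable u v := by
        intro hr
        obtain ⟨w, hw⟩ := exists_adj_of_reachable G₁ u v hr hne
        exact hu (Finset.mem_union_left _ (h₁ u w hw).1)
      have hr2 : ¬ G₂.Reachable u v := by
        intro hr
        obtain ⟨w, hw⟩ := exists_adj_of_reachable G₂ u v hr hne
        exact hu (Finset.mem_union_right _ (h₂ u w hw).1)
      rw [effRes_eq_top_of_not_reachable G₁ u v hr1,
        effRes_eq_top_of_not_reachable G₂ u v hr2]
  have hG : G₁ = G₂ := graphs_eq_of_effRes_eq G₁ G₂ Heff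
  refine ⟨hG, ?_, ?_⟩
  · intro v hv u hadj
    rw [hG] at hadj
    exact (Finset.mem_sdiff.mp hv).2 (h₂ v u hadj).1
  · intro v hv u hadj
    rw [← hG] at hadj
    exact (Finset.mem_sdiff.mp hv).2 (h₁ v u hadj).1

end RP
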